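/- If n is an odd perfect number with exactly 20 distinct prime factors, then the smallest prime factor of n is at most 17, the second smallest prime factor is at most 61, and the third smallest prime factor is at most 1301. -/

import Mathlib

open Finset

noncomputable def ratf (x : ℕ) : ℚ := (x : ℚ) / ((x : ℚ) - 1)

lemma one_lt_cast {x : ℕ} (hx : 2 ≤ x) : (1:ℚ) < (x:ℚ) := by exact_mod_cast hx

lemma ratf_nonneg {x : ℕ} (hx : 2 ≤ x) : 0 ≤ ratf x := by
  have h := one_lt_cast hx
  exact div_nonneg (by linarith) (by linarith)

lemma ratf_le {b x : ℕ} (hb : 2 ≤ b) (hx : b ≤ x) : ratf x ≤ (b:ℚ)/((b:ℚ)-1) := by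
  have hb1 := one_lt_cast hb
  have hx1 := one_lt_cast (hb.trans hx)
  have hbx : (b:ℚ) ≤ (x:ℚ) := by exact_mod_cast hx
  unfold ratf
  rw [div_le_div_iff₀ (by linarith) (by linarith)]
  nlinarith

def refProd : ℕ → ℕ → ℚ
  | _, 0 => 1
  | b, (m+1) => ((b:ℚ)/((b:ℚ)-1)) * refProd (b+2) m

lemma prodBound (l : List ℕ) : ∀ (b : ℕ), 3 ≤ b → l.Pairwise (· < ·) →
    (∀ x ∈ l, Odd x) → (∀ x ∈ l, b ≤ x) →
    (l.map ratf).prod ≤ refProd b l.length := by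
  induction l with
  | nil => intro b hb _ _ _; simp [refProd]
  | cons x t ih =>
    intro b hb hs hodd hge
    have hx : b ≤ x := hge x (.head _)
    have hxodd := hodd x (.head _)
    obtain ⟨hlt, hst⟩ := List.pairwise_cons.mp hs
    have ht : ∀ y ∈ t, b + 2 ≤ y := by
      intro y hy
      have h1 := hlt y hy
      have h2 := hodd y (.tail _ hy)
      rcases hxodd with ⟨i, hi⟩; rcases h2 with ⟨j, hj⟩; omega
    have hrec := ih (b+2) (by omega) hst (fun y hy => hodd y (.tail _ hy)) ht
    have htail_nonneg : 0 ≤ (t.map ratf).prod := by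
      apply List.prod_nonneg
      intro a ha
      obtain ⟨y, hy, rfl⟩ := List.mem_map.mp ha
      exact ratf_nonneg (by have := ht y hy; omega)
    rw [List.map_cons, List.prod_cons, List.length_cons, refProd]
    have h1 : ratf x ≤ (b:ℚ)/((b:ℚ)-1) := ratf_le (by omega) hx
    have hb1 := one_lt_cast (show 2 ≤ b by omega)
    apply mul_le_mul h1 hrec htail_nonneg (div_nonneg (by linarith) (by linarith))

lemma geom_nat (p a : ℕ) (hp : 2 ≤ p) :
    (∑ k ∈ Finset.range (a+1), p^k) * (p-1) = p^(a+1) - 1 := by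
  have h1 : (1:ℕ) ≤ p ^ (a+1) := Nat.one_le_pow _ _ (by omega)
  have h2 : (1:ℕ) ≤ p := by omega
  have := geom_sum_mul (p:ℤ) (a+1)
  zify [h1, h2]
  linarith [this]

lemma keyA (n : ℕ) (hn : Nat.Perfect n) (hne : n.primeFactors.Nonempty) :
    2 * ∏ p ∈ n.primeFactors, (p-1) < ∏ p ∈ n.primeFactors, p := by
  have hpos : 0 < n := hn.2
  have hσ := (Nat.perfect_iff_sum_divisors_eq_two_mul hpos).mp hn
  have hsum := Nat.sum_divisors (n := n) (by omega)
  have hfac : ∏ p ∈ n.primeFactors, p ^ n.factorization p = n := by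
    conv_rhs => rw [← Nat.factorization_prod_pow_eq_self (n := n) (by omega)]
    rw [Finsupp.prod]
    exact (Finset.prod_congr n.support_factorization.symm fun _ _ => rfl).symm
  have step : n * (2 * ∏ p ∈ n.primeFactors, (p-1)) < n * ∏ p ∈ n.primeFactors, p := by
    calc n * (2 * ∏ p ∈ n.primeFactors, (p-1))
        = (2 * n) * ∏ p ∈ n.primeFactors, (p-1) := by ring
      _ = (∏ p ∈ n.primeFactors, ∑ k ∈ Finset.range (n.factorization p + 1), p ^ k)
            * ∏ p ∈ n.primeFactors, (p-1) := by rw [← hσ, hsum]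
      _ = ∏ p ∈ n.primeFactors,
            ((∑ k ∈ Finset.range (n.factorization p + 1), p ^ k) * (p-1)) := by
          rw [Finset.prod_mul_distrib]
      _ = ∏ p ∈ n.primeFactors, (p ^ (n.factorization p + 1) - 1) := by
          exact Finset.prod_congr rfl fun p hp =>
            geom_nat p _ (Nat.prime_of_mem_primeFactors hp).two_le
      _ < ∏ p ∈ n.primeFactors, p ^ (n.factorization p + 1) := by
          apply Finset.prod_lt_prod_of_nonempty _ _ hne
          · intro p hp
            have h2 := (Nat.prime_of_mem_primeFactors hp).two_le
            have : 2 ≤ p ^ (n.factorization p + 1) :=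
              le_trans h2 (Nat.le_self_pow (by omega) p)
            omega
          · intro p hp
            have : 1 ≤ p ^ (n.factorization p + 1) :=
              Nat.one_le_pow _ _ (Nat.prime_of_mem_primeFactors hp).pos
            omega
      _ = ∏ p ∈ n.primeFactors, (p * p ^ n.factorization p) := by
          exact Finset.prod_congr rfl fun p hp => (pow_succ' p _)
      _ = (∏ p ∈ n.primeFactors, p) * ∏ p ∈ n.primeFactors, p ^ n.factorization p := by
          rw [Finset.prod_mul_distrib]
      _ = n * ∏ p ∈ n.primeFactors, p := by rw [hfac, mul_comm]
  exact Nat.lt_of_mul_lt_mul_left step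

lemma keyQ (n : ℕ) (hn : Nat.Perfect n) (hne : n.primeFactors.Nonempty) :
    2 < ∏ p ∈ n.primeFactors, ratf p := by
  have hA := keyA n hn hne
  have hUcast : ((∏ p ∈ n.primeFactors, (p-1) : ℕ) : ℚ)
      = ∏ p ∈ n.primeFactors, ((p:ℚ) - 1) := by
    push_cast
    exact Finset.prod_congr rfl fun p hp =>
      Nat.cast_sub (Nat.prime_of_mem_primeFactors hp).one_le
  have hUpos : 0 < ∏ p ∈ n.primeFactors, ((p:ℚ) - 1) := by
    apply Finset.prod_pos
    intro p hp
    have : (2:ℚ) ≤ (p:ℚ) := by exact_mod_cast (Nat.prime_of_mem_primeFactors hp).two_le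
    linarith
  have hAQ : 2 * ∏ p ∈ n.primeFactors, ((p:ℚ) - 1) < ∏ p ∈ n.primeFactors, (p:ℚ) := by
    calc (2:ℚ) * ∏ p ∈ n.primeFactors, ((p:ℚ) - 1)
        = ((2 * ∏ p ∈ n.primeFactors, (p-1) : ℕ) : ℚ) := by
          rw [Nat.cast_mul, hUcast]; norm_num
      _ < ((∏ p ∈ n.primeFactors, p : ℕ) : ℚ) := by exact_mod_cast hA
      _ = ∏ p ∈ n.primeFactors, (p:ℚ) := by push_cast; rfl
  have hprod : ∏ p ∈ n.primeFactors, ratf p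
      = (∏ p ∈ n.primeFactors, (p:ℚ)) / ∏ p ∈ n.primeFactors, ((p:ℚ) - 1) := by
    rw [← Finset.prod_div_distrib]; rfl
  rw [hprod, lt_div_iff₀ hUpos]
  linarith

/-- If `n` is an odd perfect number with exactly 20 distinct prime factors, then its
smallest prime factor is at most 17, its second smallest prime factor is at most 61,
and its third smallest prime factor is at most 1301. -/
theorem opn_twenty_factors_bounds (n : ℕ) (hn : Nat.Perfect n) (hodd : Odd n)
    (hω : n.primeFactors.card = 20) :
    n.minFac ≤ 17 ∧ (Finset.sort n.primeFactors (· ≤ ·))[1]! ≤ 61 ∧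
      (Finset.sort n.primeFactors (· ≤ ·))[2]! ≤ 1301 := by
  have hpos : 0 < n := hn.2
  have hne : n.primeFactors.Nonempty := Finset.card_pos.mp (by rw [hω]; norm_num)
  have hQ := keyQ n hn hne
  have hlistprod : ((Finset.sort n.primeFactors (· ≤ ·)).map ratf).prod
      = ∏ p ∈ n.primeFactors, ratf p := by
    rw [← Finset.prod_map_toList]
    exact List.Perm.prod_eq
      ((Finset.sort_perm_toList (r := (· ≤ ·)) n.primeFactors).map ratf)
  have hlen : (Finset.sort n.primeFactors (· ≤ ·)).length = 20 := by
    rw [Finset.length_sort, hω]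
  have hsort : (Finset.sort n.primeFactors (· ≤ ·)).Pairwise (· < ·) :=
    (Finset.sortedLT_sort n.primeFactors).pairwise
  have hmem : ∀ x ∈ Finset.sort n.primeFactors (· ≤ ·), x ∈ n.primeFactors :=
    fun x hx => (Finset.mem_sort _).mp hx
  have hoddl : ∀ x ∈ Finset.sort n.primeFactors (· ≤ ·), Odd x := by
    intro x hx
    have hdvd : x ∣ n := Nat.dvd_of_mem_primeFactors (hmem x hx)
    rcases Nat.even_or_odd x with he | ho
    · exfalso
      have : 2 ∣ n := dvd_trans he.two_dvd hdvd
      rw [Nat.odd_iff] at hodd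
      omega
    · exact ho
  have hprime : ∀ x ∈ Finset.sort n.primeFactors (· ≤ ·), x.Prime :=
    fun x hx => Nat.prime_of_mem_primeFactors (hmem x hx)
  have hge3 : ∀ x ∈ Finset.sort n.primeFactors (· ≤ ·), 3 ≤ x := by
    intro x hx
    have h2 := (hprime x hx).two_le
    have := hoddl x hx
    rw [Nat.odd_iff] at this
    omega
  obtain ⟨p0, p1, p2, t, hl⟩ : ∃ a b c t,
      Finset.sort n.primeFactors (· ≤ ·) = a :: b :: c :: t := by
    rcases hL : Finset.sort n.primeFactors (· ≤ ·) with _ | ⟨a, _ | ⟨b, _ | ⟨c, t⟩⟩⟩ <;>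
      rw [hL] at hlen
    · simp at hlen
    · simp at hlen
    · simp at hlen
    · exact ⟨a, b, c, t, rfl⟩
  rw [hl] at hlistprod hlen hsort hmem hoddl hprime hge3
  rw [hl]
  simp only [List.getElem!_cons_succ, List.getElem!_cons_zero]
  simp only [List.length_cons] at hlen
  obtain ⟨hlt0, hsort1⟩ := List.pairwise_cons.mp hsort
  obtain ⟨hlt1, hsort2⟩ := List.pairwise_cons.mp hsort1
  obtain ⟨hlt2, hsort3⟩ := List.pairwise_cons.mp hsort2
  have hp0 : 3 ≤ p0 := hge3 p0 (by simp)
  have hp0odd := hoddl p0 (by simp)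
  have hp1odd := hoddl p1 (by simp)
  have hp2odd := hoddl p2 (by simp)
  rw [Nat.odd_iff] at hp0odd hp1odd hp2odd
  have htl : t.length = 17 := by omega
  have hoddl1 : ∀ x ∈ p1 :: p2 :: t, Odd x := fun x hx => hoddl x (.tail _ hx)
  have hoddl2 : ∀ x ∈ p2 :: t, Odd x := fun x hx => hoddl1 x (.tail _ hx)
  have hprod_cons : ratf p0 * (ratf p1 * ((t.map ratf).prod * ratf p2))
      = ∏ p ∈ n.primeFactors, ratf p := by
    rw [← hlistprod]
    simp only [List.map_cons, List.prod_cons]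
    ring
  have htnn : ∀ (L : List ℕ), (∀ y ∈ L, Odd y) → (∀ y ∈ L, 3 ≤ y) →
      0 ≤ (L.map ratf).prod := by
    intro L _ hL
    apply List.prod_nonneg
    intro a ha
    obtain ⟨y, hy, rfl⟩ := List.mem_map.mp ha
    exact ratf_nonneg (by have := hL y hy; omega)
  refine ⟨?_, ?_, ?_⟩
  · by_contra h1
    push_neg at h1
    have hmdvd := Nat.minFac_dvd n
    have hmodd : Odd n.minFac := by
      rcases Nat.even_or_odd n.minFac with he | ho
      · exfalso
        have : 2 ∣ n := dvd_trans he.two_dvd hmdvd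
        rw [Nat.odd_iff] at hodd
        omega
      · exact ho
    rw [Nat.odd_iff] at hmodd
    have hge19 : ∀ x ∈ p0 :: p1 :: p2 :: t, 19 ≤ x := by
      intro x hx
      have := Nat.minFac_le_of_dvd (hprime x hx).two_le
        (Nat.dvd_of_mem_primeFactors (hmem x hx))
      omega
    have hb := prodBound (p0 :: p1 :: p2 :: t) 19 (by omega) hsort
      hoddl hge19
    rw [hlistprod] at hb
    simp only [List.length_cons, htl] at hb
    have hnum : refProd 19 (17 + 1 + 1 + 1) ≤ 2 := by norm_num [refProd]
    linarith
  · by_contra h2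
    push_neg at h2
    have hge63 : ∀ y ∈ p1 :: p2 :: t, 63 ≤ y := by
      intro y hy
      rcases List.mem_cons.mp hy with rfl | hy'
      · omega
      · have := hlt1 y hy'
        omega
    have hb := prodBound (p1 :: p2 :: t) 63 (by omega) hsort1 hoddl1 hge63
    simp only [List.length_cons, htl] at hb
    rw [List.map_cons, List.map_cons, List.prod_cons, List.prod_cons] at hb
    have hr0 : ratf p0 ≤ 3/2 := by
      calc ratf p0 ≤ ((3:ℕ):ℚ)/(((3:ℕ):ℚ)-1) := ratf_le (by norm_num) hp0
        _ = 3/2 := by norm_num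
    have htpnn : 0 ≤ ratf p1 * (ratf p2 * (t.map ratf).prod) := by
      have h1 : (0:ℚ) ≤ ratf p1 := ratf_nonneg (by have := hge63 p1 (by simp); omega)
      have h2 : (0:ℚ) ≤ ratf p2 := ratf_nonneg (by have := hge63 p2 (by simp); omega)
      have h3 := htnn t (fun y hy => hoddl2 y (.tail _ hy))
        (fun y hy => by have := hge63 y (.tail _ (.tail _ hy)); omega)
      positivity
    have hmul := mul_le_mul hr0 hb htpnn (by norm_num)
    have hnum : (3/2 : ℚ) * refProd 63 (17 + 1 + 1) ≤ 2 := by norm_num [refProd]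
    have htot : ratf p0 * (ratf p1 * (ratf p2 * (t.map ratf).prod))
        = ∏ p ∈ n.primeFactors, ratf p := by rw [← hprod_cons]; ring
    rw [htot] at hmul
    linarith
  · by_contra h3
    push_neg at h3
    have hp1gt : p0 < p1 := hlt0 p1 (by simp)
    have hp1ge5 : 5 ≤ p1 := by omega
    have hge1303 : ∀ y ∈ p2 :: t, 1303 ≤ y := by
      intro y hy
      rcases List.mem_cons.mp hy with rfl | hy'
      · omega
      · have h1 := hlt2 y hy'
        omega
    have hb := prodBound (p2 :: t) 1303 (by omega) hsort2 hoddl2 hge1303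
    simp only [List.length_cons, htl] at hb
    rw [List.map_cons, List.prod_cons] at hb
    have hr0 : ratf p0 ≤ 3/2 := by
      calc ratf p0 ≤ ((3:ℕ):ℚ)/(((3:ℕ):ℚ)-1) := ratf_le (by norm_num) hp0
        _ = 3/2 := by norm_num
    have hr1 : ratf p1 ≤ 5/4 := by
      calc ratf p1 ≤ ((5:ℕ):ℚ)/(((5:ℕ):ℚ)-1) := ratf_le (by norm_num) hp1ge5
        _ = 5/4 := by norm_num
    have h2nn : (0:ℚ) ≤ ratf p2 * (t.map ratf).prod := by
      have h1 : (0:ℚ) ≤ ratf p2 := ratf_nonneg (by have := hge1303 p2 (by simp); omega)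
      have h3 := htnn t (fun y hy => hoddl2 y (.tail _ hy))
        (fun y hy => by have := hge1303 y (.tail _ hy); omega)
      positivity
    have hmul1 := mul_le_mul hr1 hb h2nn (by norm_num)
    have hmul := mul_le_mul hr0 hmul1
      (mul_nonneg (ratf_nonneg (show 2 ≤ p1 by omega)) h2nn) (by norm_num)
    have hnum : (3/2 : ℚ) * ((5/4) * refProd 1303 (17 + 1)) ≤ 2 := by
      norm_num [refProd]
    have htot : ratf p0 * (ratf p1 * (ratf p2 * (t.map ratf).prod))
        = ∏ p ∈ n.primeFactors, ratf p := by rw [← hprod_cons]; ring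
    rw [htot] at hmul
    linarith
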